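/- Let A be a commutative algebra, B an integral domain of characteristic zero, f : A → B linear, and a ∈ A an idempotent (a² = a). If Φ_{n+1}(f)(a,a,…,a) = 0 then f(a) = k·1_B for some integer 0 ≤ k ≤ n. -/

import Mathlib

open Finset

variable {A B : Type*} [CommRing A] [CommRing B]

/-- Inductive Frobenius transformation on lists:
`Φ_{n+1}(f)(a₁,…,a_{n+1}) = f(a₁)Φ_n(f)(a₂,…) − ∑_j Φ_n(f)(a₂,…,a₁a_j,…)`. -/
def PhiL (f : A → B) : List A → B
  | [] => 1
  | a :: l => f a * PhiL f l -
      ∑ j ∈ Finset.range l.length, PhiL f (l.modify j (fun x => a * x))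
termination_by l => l.length
decreasing_by all_goals simp [List.length_modify]


lemma modify_replicate (a : A) (ha : a ^ 2 = a) (n j : ℕ) :
    (List.replicate n a).modify j (fun x => a * x) = List.replicate n a := by
  apply List.ext_getElem (by simp [List.length_modify])
  intro i h1 h2
  rw [List.getElem_modify]
  simp only [List.getElem_replicate]
  split <;> simp [← pow_two, ha]

lemma phi_rep (f : A → B) (a : A) (ha : a ^ 2 = a) (n : ℕ) :
    PhiL f (List.replicate n a) = ∏ k ∈ range n, (f a - k) := by
  induction n with
  | zero => simp [PhiL]
  | succ n ih =>
    rw [List.replicate_succ, PhiL, ih]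
    simp only [List.length_replicate, modify_replicate a ha, ih, Finset.sum_const,
      Finset.card_range, nsmul_eq_mul, Finset.prod_range_succ]
    ring

/-- If `B` is an integral domain of characteristic zero, `a` is idempotent and
`Φ_{n+1}(f)(a,…,a) = 0`, then `f(a) = k·1_B` for some integer `0 ≤ k ≤ n`. -/
theorem f_idempotent_eq_nat {F : Type*} [Field F] [IsDomain B] [CharZero B]
    [Algebra F A] [Algebra F B] (f : A →ₗ[F] B) (n : ℕ) (a : A)
    (ha : a ^ 2 = a)
    (h : PhiL (f : A → B) (List.replicate (n + 1) a) = 0) :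
    ∃ j : ℕ, j ≤ n ∧ f a = (j : B) := by
  rw [phi_rep _ a ha] at h
  obtain ⟨k, hk, h0⟩ := Finset.prod_eq_zero_iff.mp h
  exact ⟨k, Nat.lt_succ_iff.mp (Finset.mem_range.mp hk), sub_eq_zero.mp h0⟩
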